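/- arXiv:2306.04454 — 3 statements merged into one kernel-verified Lean document; each statement's English description precedes it below -/
import Mathlib

section
/- Let n ≥ 1, let Θ_X be an n×n real symmetric positive definite matrix with least eigenvalue λ_min > 0, let K_X be an n×n real symmetric matrix, let θ, κ ∈ ℝⁿ and Θ_x, K_x ∈ ℝ. Let α ∈ ℝ, B ≥ 0, γ ≥ 0. Assume |θ_i| ≤ B for every i, |K_x − α·Θ_x| ≤ γ, |κ_i − α·θ_i| ≤ γ for every i, and the operator norm of K_X − α·Θ_X is at most n·γ. Then |σ²_NN − α·σ²_NTKGP| ≤ γ + n²γB²/λ_min² + 2nγB/λ_min = γ·(1 + nB/λ_min)². -/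
open Matrix

namespace NTKAux

noncomputable def eN {n : ℕ} (v : Fin n → ℝ) : ℝ :=
  ‖(WithLp.equiv 2 (Fin n → ℝ)).symm v‖

lemma eN_nonneg {n : ℕ} (v : Fin n → ℝ) : 0 ≤ eN v := norm_nonneg _

lemma dot_eq_inner {n : ℕ} (u v : Fin n → ℝ) :
    u ⬝ᵥ v = inner (𝕜 := ℝ) ((WithLp.equiv 2 (Fin n → ℝ)).symm u)
      ((WithLp.equiv 2 (Fin n → ℝ)).symm v) := by
  simp [dotProduct, PiLp.inner_apply, RCLike.inner_apply, mul_comm]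

lemma abs_dot_le {n : ℕ} (u v : Fin n → ℝ) : |u ⬝ᵥ v| ≤ eN u * eN v := by
  rw [dot_eq_inner]; exact abs_real_inner_le_norm _ _

lemma eN_mulVec_le {n : ℕ} (A : Matrix (Fin n) (Fin n) ℝ) (v : Fin n → ℝ) :
    eN (A *ᵥ v) ≤ ‖Matrix.toEuclideanCLM (𝕜 := ℝ) A‖ * eN v := by
  have h1 : (WithLp.equiv 2 (Fin n → ℝ)).symm (A *ᵥ v)
      = Matrix.toEuclideanCLM (𝕜 := ℝ) A ((WithLp.equiv 2 (Fin n → ℝ)).symm v) :=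
    rfl
  rw [eN, h1]
  exact ContinuousLinearMap.le_opNorm _ _

lemma eN_le_sqrt {n : ℕ} (v : Fin n → ℝ) (C : ℝ) (hC : 0 ≤ C)
    (h : ∀ i, |v i| ≤ C) : eN v ≤ Real.sqrt n * C := by
  rw [eN, EuclideanSpace.norm_eq]
  have : ∑ i, ‖((WithLp.equiv 2 (Fin n → ℝ)).symm v) i‖ ^ 2 ≤ n * C ^ 2 := by
    calc ∑ i, ‖((WithLp.equiv 2 (Fin n → ℝ)).symm v) i‖ ^ 2
        ≤ ∑ _i : Fin n, C ^ 2 := by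
          refine Finset.sum_le_sum fun i _ => ?_
          rw [show ((WithLp.equiv 2 (Fin n → ℝ)).symm v) i = v i from rfl,
            Real.norm_eq_abs]
          nlinarith [abs_nonneg (v i), h i]
      _ = n * C ^ 2 := by simp [mul_comm]
  calc Real.sqrt (∑ i, ‖((WithLp.equiv 2 (Fin n → ℝ)).symm v) i‖ ^ 2)
      ≤ Real.sqrt (n * C ^ 2) := Real.sqrt_le_sqrt this
    _ = Real.sqrt n * C := by
        rw [Real.sqrt_mul (Nat.cast_nonneg n), Real.sqrt_sq hC]

lemma rayleigh_lower {n : ℕ} (A : Matrix (Fin n) (Fin n) ℝ) (hA : A.IsHermitian)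
    (c : ℝ) (hc : ∀ i, c ≤ hA.eigenvalues i) (w : Fin n → ℝ) :
    c * (w ⬝ᵥ w) ≤ w ⬝ᵥ (A *ᵥ w) := by
  classical
  set U := (hA.eigenvectorUnitary : Matrix (Fin n) (Fin n) ℝ) with hUdef
  have hU : U * star U = 1 := mem_unitaryGroup_iff.mp hA.eigenvectorUnitary.2
  set p : Fin n → ℝ := star U *ᵥ w with hp
  have hvm : w ᵥ* U = p := by
    funext i
    simp [hp, vecMul, mulVec, dotProduct, conjTranspose_apply, mul_comm]
  have hAw : w ⬝ᵥ (A *ᵥ w) = ∑ i, hA.eigenvalues i * p i ^ 2 := by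
    conv_lhs => rw [hA.spectral_theorem, Unitary.conjStarAlgAut_apply]
    rw [← mulVec_mulVec, ← mulVec_mulVec, dotProduct_mulVec, hvm]
    simp [dotProduct, mulVec_diagonal, Function.comp]
    ring_nf
    exact Finset.sum_congr rfl fun i _ => by ring
  have hww : w ⬝ᵥ w = ∑ i, p i ^ 2 := by
    have : w ⬝ᵥ w = w ⬝ᵥ ((U * star U) *ᵥ w) := by rw [hU, one_mulVec]
    rw [this, ← mulVec_mulVec, dotProduct_mulVec, hvm]
    simp [dotProduct, hp, sq]
  rw [hAw, hww, Finset.mul_sum]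
  exact Finset.sum_le_sum fun i _ => by nlinarith [sq_nonneg (p i), hc i]

lemma inv_mulVec_eN_le {n : ℕ} (A : Matrix (Fin n) (Fin n) ℝ) (hA : A.IsHermitian)
    (hpd : A.PosDef) (lam : ℝ) (hlam : lam = ⨅ i, hA.eigenvalues i) (hpos : 0 < lam)
    (v : Fin n → ℝ) : eN (A⁻¹ *ᵥ v) ≤ eN v / lam := by
  set w := A⁻¹ *ᵥ v with hw
  have hAw : A *ᵥ w = v := by
    rw [hw, mulVec_mulVec, mul_nonsing_inv _ hpd.det_pos.ne'.isUnit, one_mulVec]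
  have h1 : lam * (w ⬝ᵥ w) ≤ w ⬝ᵥ v := by
    have := rayleigh_lower A hA lam
      (fun i => hlam ▸ ciInf_le (Finite.bddBelow_range _) i) w
    rwa [hAw] at this
  have hww : w ⬝ᵥ w = eN w ^ 2 := by
    rw [dot_eq_inner]; exact real_inner_self_eq_norm_sq _
  have h2 : w ⬝ᵥ v ≤ eN w * eN v := le_trans (le_abs_self _) (abs_dot_le w v)
  rw [le_div_iff₀ hpos]
  rcases (eN_nonneg w).eq_or_lt with h0 | h0
  · rw [← h0, zero_mul]; exact eN_nonneg v
  · nlinarith [eN_nonneg v]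

end NTKAux

open NTKAux

/-- Formal version of Theorem 3.1: with `σ²_NTKGP = Θ_x − θᵀΘ_X⁻¹θ` and
`σ²_NN = K_x + θᵀΘ_X⁻¹K_XΘ_X⁻¹θ − κᵀΘ_X⁻¹θ − θᵀΘ_X⁻¹κ`, under the stated
bounds, `|σ²_NN − α·σ²_NTKGP| ≤ γ + n²γB²/λ_min² + 2nγB/λ_min
 = γ·(1 + nB/λ_min)²`. -/
theorem sigmaNN_sub_alpha_sigmaNTKGP_bound
    (n : ℕ) (hn : 1 ≤ n)
    (ΘX KX : Matrix (Fin n) (Fin n) ℝ)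
    (hΘsym : ΘX.IsHermitian) (hΘpd : ΘX.PosDef) (hKsym : KX.IsHermitian)
    (lammin : ℝ) (hlam : lammin = ⨅ i, hΘsym.eigenvalues i) (hlampos : 0 < lammin)
    (θ κ : Fin n → ℝ) (Θx Kx α B γ : ℝ) (hB : 0 ≤ B) (hγ : 0 ≤ γ)
    (hθB : ∀ i, |θ i| ≤ B)
    (hKxΘx : |Kx - α * Θx| ≤ γ)
    (hκθ : ∀ i, |κ i - α * θ i| ≤ γ)
    (hop : ‖Matrix.toEuclideanCLM (𝕜 := ℝ) (KX - α • ΘX)‖ ≤ n * γ) :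
    |(Kx + θ ⬝ᵥ (ΘX⁻¹ *ᵥ (KX *ᵥ (ΘX⁻¹ *ᵥ θ))) - κ ⬝ᵥ (ΘX⁻¹ *ᵥ θ)
        - θ ⬝ᵥ (ΘX⁻¹ *ᵥ κ))
      - α * (Θx - θ ⬝ᵥ (ΘX⁻¹ *ᵥ θ))| ≤
      γ + n ^ 2 * γ * B ^ 2 / lammin ^ 2 + 2 * n * γ * B / lammin ∧
    γ + n ^ 2 * γ * B ^ 2 / lammin ^ 2 + 2 * n * γ * B / lammin =
      γ * (1 + n * B / lammin) ^ 2 := by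
  constructor
  · set E : Matrix (Fin n) (Fin n) ℝ := KX - α • ΘX with hE
    set δ : Fin n → ℝ := κ - α • θ with hδ
    have hc : ΘX *ᵥ (ΘX⁻¹ *ᵥ θ) = θ := by
      rw [mulVec_mulVec, mul_nonsing_inv _ hΘpd.det_pos.ne'.isUnit, one_mulVec]
    have key : (Kx + θ ⬝ᵥ (ΘX⁻¹ *ᵥ (KX *ᵥ (ΘX⁻¹ *ᵥ θ))) - κ ⬝ᵥ (ΘX⁻¹ *ᵥ θ)
          - θ ⬝ᵥ (ΘX⁻¹ *ᵥ κ)) - α * (Θx - θ ⬝ᵥ (ΘX⁻¹ *ᵥ θ))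
        = (Kx - α * Θx) + θ ⬝ᵥ (ΘX⁻¹ *ᵥ (E *ᵥ (ΘX⁻¹ *ᵥ θ)))
          - δ ⬝ᵥ (ΘX⁻¹ *ᵥ θ) - θ ⬝ᵥ (ΘX⁻¹ *ᵥ δ) := by
      simp only [hE, hδ, sub_mulVec, mulVec_sub, mulVec_smul, smul_mulVec,
        dotProduct_sub, sub_dotProduct, dotProduct_smul, smul_dotProduct,
        smul_eq_mul, hc]
      ring
    rw [key]
    set sn := Real.sqrt n with hsndef
    have hsn : sn * sn = (n : ℝ) := Real.mul_self_sqrt (Nat.cast_nonneg n)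
    have hsn0 : 0 ≤ sn := Real.sqrt_nonneg _
    have hθn : eN θ ≤ sn * B := eN_le_sqrt θ B hB hθB
    have hδn : eN δ ≤ sn * γ := by
      refine eN_le_sqrt δ γ hγ fun i => ?_
      simpa [hδ, Pi.sub_apply, Pi.smul_apply, smul_eq_mul] using hκθ i
    have hMθ : eN (ΘX⁻¹ *ᵥ θ) ≤ sn * B / lammin := by
      refine le_trans (inv_mulVec_eN_le ΘX hΘsym hΘpd lammin hlam hlampos θ) ?_
      gcongr
    have hMδ : eN (ΘX⁻¹ *ᵥ δ) ≤ sn * γ / lammin := by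
      refine le_trans (inv_mulVec_eN_le ΘX hΘsym hΘpd lammin hlam hlampos δ) ?_
      gcongr
    have hEx : eN (E *ᵥ (ΘX⁻¹ *ᵥ θ)) ≤ (n * γ) * (sn * B / lammin) := by
      refine le_trans (eN_mulVec_le E _) ?_
      exact mul_le_mul hop hMθ (eN_nonneg _) (by positivity)
    have hMEx : eN (ΘX⁻¹ *ᵥ (E *ᵥ (ΘX⁻¹ *ᵥ θ)))
        ≤ ((n * γ) * (sn * B / lammin)) / lammin := by
      refine le_trans (inv_mulVec_eN_le ΘX hΘsym hΘpd lammin hlam hlampos _) ?_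
      gcongr
    have hb : |θ ⬝ᵥ (ΘX⁻¹ *ᵥ (E *ᵥ (ΘX⁻¹ *ᵥ θ)))|
        ≤ (sn * B) * (((n * γ) * (sn * B / lammin)) / lammin) :=
      le_trans (abs_dot_le _ _) (mul_le_mul hθn hMEx (eN_nonneg _) (by positivity))
    have hbv : (sn * B) * (((n * γ) * (sn * B / lammin)) / lammin)
        = (n : ℝ) ^ 2 * γ * B ^ 2 / lammin ^ 2 := by
      field_simp
      linear_combination (γ * B ^ 2) * hsn
    have hc1 : |δ ⬝ᵥ (ΘX⁻¹ *ᵥ θ)| ≤ (n : ℝ) * γ * B / lammin := by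
      have h := le_trans (abs_dot_le δ _) (mul_le_mul hδn hMθ (eN_nonneg _) (by positivity))
      have hv : (sn * γ) * (sn * B / lammin) = (n : ℝ) * γ * B / lammin := by
        field_simp
        linear_combination (γ * B) * hsn
      linarith [hv ▸ h]
    have hd1 : |θ ⬝ᵥ (ΘX⁻¹ *ᵥ δ)| ≤ (n : ℝ) * γ * B / lammin := by
      have h := le_trans (abs_dot_le θ _) (mul_le_mul hθn hMδ (eN_nonneg _) (by positivity))
      have hv : (sn * B) * (sn * γ / lammin) = (n : ℝ) * γ * B / lammin := by
        field_simp
        linear_combination (γ * B) * hsn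
      linarith [hv ▸ h]
    have tri : ∀ a b c d : ℝ, |a + b - c - d| ≤ |a| + |b| + |c| + |d| := by
      intro a b c d
      have h0 : a + b - c - d = (a + b + -c) + -d := by ring
      rw [h0]
      have h1 := abs_add_le (a + b + -c) (-d)
      have h2 := abs_add_le (a + b) (-c)
      have h3 := abs_add_le a b
      simp only [abs_neg] at h1 h2
      linarith
    refine le_trans (tri _ _ _ _) ?_
    rw [hbv] at hb
    have h5 : 2 * (n : ℝ) * γ * B / lammin
        = (n : ℝ) * γ * B / lammin + (n : ℝ) * γ * B / lammin := by ring
    rw [h5]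
    linarith
  · field_simp
    ring
end

section
/- Define ρ̃_±^(0) = ±‖x‖·‖x'‖ and, for ℓ ≥ 1, ρ̃_±^(ℓ) = √(u^(ℓ−1))·ρ( ρ̃_±^(ℓ−1) / √(u^(ℓ−1)) ) + σ_b², where u^(ℓ) = (‖x‖² + ℓσ_b²)·(‖x'‖² + ℓσ_b²). Then for every ℓ ≥ 0: ρ̃_−^(ℓ) ≤ K^(ℓ)(x,x') ≤ ρ̃_+^(ℓ). -/
open Real

/-- The dual activation function of the scaled ReLU `φ(t) = √2·max(t,0)`. -/
noncomputable def rho (r : ℝ) : ℝ :=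
  (1 / π) * (Real.sqrt (1 - r ^ 2) + (π - Real.arccos r) * r)

/-- The dual activation function of the derivative of the scaled ReLU. -/
noncomputable def rhoPrime (r : ℝ) : ℝ := (π - Real.arccos r) / π

/-- The depth-`ℓ` NNGP kernel `K^(ℓ)` of a ReLU network with bias variance `σb²`,
defined recursively by `K^(0)(v,w) = ⟪v,w⟫` and
`K^(ℓ)(v,w) = √(K^(ℓ−1)(v,v)·K^(ℓ−1)(w,w))·ρ(K^(ℓ−1)(v,w)/√(K^(ℓ−1)(v,v)·K^(ℓ−1)(w,w))) + σb²`. -/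
noncomputable def Kker (σb : ℝ) {d : ℕ} :
    ℕ → EuclideanSpace ℝ (Fin d) → EuclideanSpace ℝ (Fin d) → ℝ
  | 0, v, w => (inner ℝ v w : ℝ)
  | ℓ + 1, v, w =>
      Real.sqrt (Kker σb ℓ v v * Kker σb ℓ w w) *
        rho (Kker σb ℓ v w / Real.sqrt (Kker σb ℓ v v * Kker σb ℓ w w)) + σb ^ 2

/-- `u^(ℓ) = (‖x‖² + ℓσ_b²)·(‖x'‖² + ℓσ_b²)`, stated for the norms `a = ‖x‖`, `b = ‖x'‖`. -/
noncomputable def uFun (σb a b : ℝ) (ℓ : ℕ) : ℝ :=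
  (a ^ 2 + ℓ * σb ^ 2) * (b ^ 2 + ℓ * σb ^ 2)

/-- `ρ̃^(0) = init` (with `init = ±‖x‖·‖x'‖`) and, for `ℓ ≥ 1`,
`ρ̃^(ℓ) = √(u^(ℓ−1))·ρ(ρ̃^(ℓ−1)/√(u^(ℓ−1))) + σ_b²`. -/
noncomputable def rhoTilde (σb a b init : ℝ) : ℕ → ℝ
  | 0 => init
  | ℓ + 1 =>
      Real.sqrt (uFun σb a b ℓ) *
        rho (rhoTilde σb a b init ℓ / Real.sqrt (uFun σb a b ℓ)) + σb ^ 2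

lemma rho_one : rho 1 = 1 := by
  simp [rho, Real.arccos_one]

lemma rho_of_one_le {r : ℝ} (h : 1 ≤ r) : rho r = r := by
  rw [rho, Real.arccos_eq_zero.mpr h, Real.sqrt_eq_zero'.mpr (by nlinarith)]
  field_simp
  ring

lemma rho_of_le_neg_one {r : ℝ} (h : r ≤ -1) : rho r = 0 := by
  rw [rho, Real.arccos_eq_pi.mpr h, Real.sqrt_eq_zero'.mpr (by nlinarith)]
  ring

lemma rho_neg_one : rho (-1) = 0 := rho_of_le_neg_one le_rfl

lemma rho_hasDerivAt {x : ℝ} (h1 : -1 < x) (h2 : x < 1) :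
    HasDerivAt rho ((π - Real.arccos x) / π) x := by
  have hx2 : 0 < 1 - x ^ 2 := by nlinarith
  have hsne : Real.sqrt (1 - x ^ 2) ≠ 0 := by positivity
  have h0 : HasDerivAt (fun r : ℝ => 1 - r ^ 2) (-(2 * x)) x := by
    simpa using (hasDerivAt_pow 2 x).const_sub 1
  have hs : HasDerivAt (fun r : ℝ => Real.sqrt (1 - r ^ 2))
      (-x / Real.sqrt (1 - x ^ 2)) x := by
    have := (Real.hasDerivAt_sqrt hx2.ne').comp x h0
    refine this.congr_deriv ?_
    field_simp
  have ha : HasDerivAt (fun r : ℝ => (π - Real.arccos r) * r)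
      (x / Real.sqrt (1 - x ^ 2) + (π - Real.arccos x)) x := by
    have harc := Real.hasDerivAt_arccos (by linarith) (by linarith)
    have := ((hasDerivAt_const x π).sub harc).mul (hasDerivAt_id x)
    refine this.congr_deriv ?_
    simp only [id, Pi.sub_apply]
    field_simp
    ring
  have := ((hs.add ha).const_mul ((1:ℝ) / π))
  refine this.congr_deriv ?_
  field_simp
  ring

lemma rho_monoOn : MonotoneOn rho (Set.Icc (-1 : ℝ) 1) := by
  apply monotoneOn_of_deriv_nonneg (convex_Icc _ _)
  · apply Continuous.continuousOn
    exact continuous_const.mul ((Real.continuous_sqrt.comp (by continuity)).add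
      ((continuous_const.sub Real.continuous_arccos).mul continuous_id))
  · rw [interior_Icc]
    intro x hx
    exact (rho_hasDerivAt hx.1 hx.2).differentiableAt.differentiableWithinAt
  · intro x hx
    rw [interior_Icc] at hx
    rw [(rho_hasDerivAt hx.1 hx.2).deriv]
    have h1 : Real.arccos x ≤ π := Real.arccos_le_pi x
    exact div_nonneg (by linarith) Real.pi_pos.le

lemma rho_mono : Monotone rho := by
  intro a b hab
  rcases le_total b (-1) with hb | hb
  · rw [rho_of_le_neg_one (hab.trans hb), rho_of_le_neg_one hb]
  rcases le_total 1 a with ha | ha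
  · rw [rho_of_one_le ha, rho_of_one_le (ha.trans hab)]; exact hab
  rcases le_total a (-1) with ha' | ha'
  · rw [rho_of_le_neg_one ha']
    rcases le_total b 1 with hb' | hb'
    · have := rho_monoOn (Set.mem_Icc.mpr ⟨le_refl (-1:ℝ), by norm_num⟩)
        (Set.mem_Icc.mpr ⟨hb, hb'⟩) hb
      rwa [rho_neg_one] at this
    · rw [rho_of_one_le hb']; linarith
  rcases le_total b 1 with hb' | hb'
  · exact rho_monoOn ⟨ha', ha⟩ ⟨hb, hb'⟩ hab
  · rw [rho_of_one_le hb']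
    have := rho_monoOn ⟨ha', ha⟩ ⟨by norm_num, le_refl (1:ℝ)⟩ ha
    rw [rho_one] at this; linarith

lemma Kker_self (σb : ℝ) {d : ℕ} (x : EuclideanSpace ℝ (Fin d)) (hx : x ≠ 0) :
    ∀ ℓ : ℕ, Kker σb ℓ x x = ‖x‖ ^ 2 + ℓ * σb ^ 2
  | 0 => by
    simp only [Kker, Nat.cast_zero, zero_mul, add_zero]
    exact real_inner_self_eq_norm_sq x
  | ℓ + 1 => by
    have hxn : 0 < ‖x‖ := norm_pos_iff.mpr hx
    have hA : 0 < ‖x‖ ^ 2 + ℓ * σb ^ 2 := by positivity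
    rw [Kker, Kker_self σb x hx ℓ, Real.sqrt_mul_self hA.le, div_self hA.ne', rho_one]
    push_cast
    ring

/-- Lemma A.10: `ρ̃_−^(ℓ) ≤ K^(ℓ)(x,x') ≤ ρ̃_+^(ℓ)` for every `ℓ ≥ 0`. -/
theorem Kker_le_rhoTilde (σb : ℝ) (hσb : 0 ≤ σb) {d : ℕ}
    (x x' : EuclideanSpace ℝ (Fin d)) (hx : x ≠ 0) (hx' : x' ≠ 0) :
    ∀ ℓ : ℕ,
      rhoTilde σb ‖x‖ ‖x'‖ (-(‖x‖ * ‖x'‖)) ℓ ≤ Kker σb ℓ x x' ∧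
      Kker σb ℓ x x' ≤ rhoTilde σb ‖x‖ ‖x'‖ (‖x‖ * ‖x'‖) ℓ := by
  intro ℓ
  induction ℓ with
  | zero =>
    have h := abs_real_inner_le_norm x x'
    have h' := abs_le.mp h
    constructor
    · simpa [rhoTilde, Kker] using h'.1
    · simpa [rhoTilde, Kker] using h'.2
  | succ ℓ ih =>
    obtain ⟨ih1, ih2⟩ := ih
    have hxn : 0 < ‖x‖ := norm_pos_iff.mpr hx
    have hxn' : 0 < ‖x'‖ := norm_pos_iff.mpr hx'
    have hu : 0 < uFun σb ‖x‖ ‖x'‖ ℓ := by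
      unfold uFun
      positivity
    have hs : 0 < Real.sqrt (uFun σb ‖x‖ ‖x'‖ ℓ) := Real.sqrt_pos.mpr hu
    have hKprod : Kker σb ℓ x x * Kker σb ℓ x' x' = uFun σb ‖x‖ ‖x'‖ ℓ := by
      rw [Kker_self σb x hx ℓ, Kker_self σb x' hx' ℓ, uFun]
    constructor
    · rw [Kker, rhoTilde, hKprod]
      have : rho (rhoTilde σb ‖x‖ ‖x'‖ (-(‖x‖ * ‖x'‖)) ℓ / Real.sqrt (uFun σb ‖x‖ ‖x'‖ ℓ))
          ≤ rho (Kker σb ℓ x x' / Real.sqrt (uFun σb ‖x‖ ‖x'‖ ℓ)) :=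
        rho_mono ((div_le_div_iff_of_pos_right hs).mpr ih1)
      nlinarith [mul_le_mul_of_nonneg_left this hs.le]
    · rw [Kker, rhoTilde, hKprod]
      have : rho (Kker σb ℓ x x' / Real.sqrt (uFun σb ‖x‖ ‖x'‖ ℓ))
          ≤ rho (rhoTilde σb ‖x‖ ‖x'‖ (‖x‖ * ‖x'‖) ℓ / Real.sqrt (uFun σb ‖x‖ ‖x'‖ ℓ)) :=
        rho_mono ((div_le_div_iff_of_pos_right hs).mpr ih2)
      nlinarith [mul_le_mul_of_nonneg_left this hs.le]
end

section
/- Let L ≥ 2 be an integer, σ_b ≥ 0, and x, x' ∈ ℝ^d nonzero. Then K^(L+1)(x,x') > 0 and 1 + Σ_{ℓ=1}^{L} ρ(r̂_−^(ℓ))·((ℓ−1)/(L+1))·Π_{ℓ'=ℓ+1}^{L+1} ρ'(r̂_−^(ℓ')) ≤ Θ(x,x')/K^(L+1)(x,x') ≤ 1 + L/ρ(r̂_−^(L+1)), where r̂_−^(1) = −1 and r̂_−^(ℓ) = ρ(r̂_−^(ℓ−1))·(ℓ−2)/(ℓ−1) for ℓ ≥ 2. -/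
open Real

/-- `r̂_−^(1) = −1` and `r̂_−^(ℓ) = ρ(r̂_−^(ℓ−1))·(ℓ−2)/(ℓ−1)` for `ℓ ≥ 2`
(the value at `0` is junk). -/
noncomputable def rHatM : ℕ → ℝ
  | 0 => 0
  | 1 => -1
  | (n + 2) => rho (rHatM (n + 1)) * (n : ℝ) / ((n : ℝ) + 1)

/-- `K̇^(ℓ)(v,w) = ρ'( K^(ℓ−1)(v,w) / √(K^(ℓ−1)(v,v)·K^(ℓ−1)(w,w)) )` for `ℓ ≥ 1`
(the value at `ℓ = 0` is junk). -/
noncomputable def Kdot (σb : ℝ) {d : ℕ} :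
    ℕ → EuclideanSpace ℝ (Fin d) → EuclideanSpace ℝ (Fin d) → ℝ
  | 0, _, _ => 1
  | ℓ + 1, v, w =>
      rhoPrime (Kker σb ℓ v w / Real.sqrt (Kker σb ℓ v v * Kker σb ℓ w w))

/-- The neural tangent kernel of an `L`-hidden-layer ReLU network:
`Θ(x,x') = Σ_{ℓ=1}^{L+1} K^(ℓ)(x,x') · Π_{ℓ'=ℓ+1}^{L+1} K̇^(ℓ')(x,x')`. -/
noncomputable def ntk (σb : ℝ) {d : ℕ} (L : ℕ)
    (v w : EuclideanSpace ℝ (Fin d)) : ℝ :=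
  ∑ ℓ ∈ Finset.Icc 1 (L + 1),
    Kker σb ℓ v w * ∏ ℓ' ∈ Finset.Icc (ℓ + 1) (L + 1), Kdot σb ℓ' v w

/-! ### Auxiliary lemmas on `rho` and `rhoPrime` -/

lemma rhoPrime_nonneg (r : ℝ) : 0 ≤ rhoPrime r :=
  div_nonneg (by linarith [Real.arccos_le_pi r]) Real.pi_pos.le

lemma rhoPrime_le_one (r : ℝ) : rhoPrime r ≤ 1 := by
  rw [rhoPrime, div_le_one Real.pi_pos]
  linarith [Real.arccos_nonneg r]

lemma rhoPrime_mono : Monotone rhoPrime := by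
  intro p q hpq
  have h := Real.monotone_arcsin hpq
  have hle : π - Real.arccos p ≤ π - Real.arccos q := by
    unfold Real.arccos; linarith
  unfold rhoPrime
  exact (div_le_div_iff_of_pos_right Real.pi_pos).mpr hle

lemma rho_hasDerivAt_s12 {x : ℝ} (hx : x ∈ Set.Ioo (-1:ℝ) 1) : HasDerivAt rho (rhoPrime x) x := by
  have h1 : x ≠ -1 := by intro h; rw [h] at hx; exact absurd hx.1 (lt_irrefl _)
  have h2 : x ≠ 1 := by intro h; rw [h] at hx; exact absurd hx.2 (lt_irrefl _)
  have hs : (0:ℝ) < 1 - x ^ 2 := by nlinarith [hx.1, hx.2]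
  have hsq : Real.sqrt (1 - x ^ 2) ≠ 0 := (Real.sqrt_pos.2 hs).ne'
  have d1 : HasDerivAt (fun r : ℝ => 1 - r ^ 2) (-(2 * x)) x := by
    simpa using (hasDerivAt_pow 2 x).const_sub 1
  have d2 : HasDerivAt (fun r : ℝ => Real.sqrt (1 - r ^ 2))
      ((-(2 * x)) / (2 * Real.sqrt (1 - x ^ 2))) x := d1.sqrt hs.ne'
  have d3 : HasDerivAt (fun r : ℝ => (π - Real.arccos r) * r)
      ((1 / Real.sqrt (1 - x ^ 2)) * x + (π - Real.arccos x) * 1) x := by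
    have := ((Real.hasDerivAt_arccos h1 h2).const_sub π).mul (hasDerivAt_id x)
    exact this.congr_deriv (by simp only [neg_neg, id])
  have d4 := (d2.add d3).const_mul (1 / π)
  have heq : (1 / π) * ((-(2 * x)) / (2 * Real.sqrt (1 - x ^ 2)) +
      ((1 / Real.sqrt (1 - x ^ 2)) * x + (π - Real.arccos x) * 1)) = rhoPrime x := by
    rw [rhoPrime]
    field_simp
    ring
  rw [heq] at d4
  exact d4

lemma rho_continuous : Continuous rho := by
  unfold rho
  exact continuous_const.mul (((continuous_const.sub (continuous_pow 2)).sqrt).add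
    ((continuous_const.sub Real.continuous_arccos).mul continuous_id))

lemma rho_monotoneOn : MonotoneOn rho (Set.Icc (-1:ℝ) 1) := by
  apply monotoneOn_of_deriv_nonneg (convex_Icc _ _) rho_continuous.continuousOn
  · rw [interior_Icc]
    exact fun x hx => ((rho_hasDerivAt_s12 hx).differentiableAt).differentiableWithinAt
  · rw [interior_Icc]
    intro x hx
    rw [(rho_hasDerivAt_s12 hx).deriv]
    exact rhoPrime_nonneg x

lemma rho_zero : rho 0 = 1 / π := by
  simp [rho]

lemma rho_nonneg {r : ℝ} (h : r ∈ Set.Icc (-1:ℝ) 1) : 0 ≤ rho r := by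
  have := rho_monotoneOn (Set.mem_Icc.2 ⟨le_refl _, by norm_num⟩) h h.1
  rwa [rho_neg_one] at this

lemma rho_le_one {r : ℝ} (h : r ∈ Set.Icc (-1:ℝ) 1) : rho r ≤ 1 := by
  have := rho_monotoneOn h (Set.mem_Icc.2 ⟨by norm_num, le_refl _⟩) h.2
  rwa [rho_one] at this

lemma le_rho {r : ℝ} (h : r ∈ Set.Icc (-1:ℝ) 1) : r ≤ rho r := by
  have hanti : AntitoneOn (fun r => rho r - r) (Set.Icc (-1:ℝ) 1) := by
    apply antitoneOn_of_deriv_nonpos (convex_Icc _ _)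
      (rho_continuous.sub continuous_id).continuousOn
    · rw [interior_Icc]
      exact fun x hx =>
        (((rho_hasDerivAt_s12 hx).sub (hasDerivAt_id x)).differentiableAt).differentiableWithinAt
    · rw [interior_Icc]
      intro x hx
      rw [((rho_hasDerivAt_s12 hx).sub (hasDerivAt_id x)).deriv]
      have h1 := Real.arccos_nonneg x
      have := Real.pi_pos
      rw [rhoPrime]
      have : (π - Real.arccos x) / π ≤ 1 := by
        rw [div_le_one Real.pi_pos]; linarith
      linarith
  have := hanti h (Set.mem_Icc.2 ⟨by norm_num, le_refl _⟩) h.2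
  simp only [rho_one] at this
  linarith

/-! ### Auxiliary lemmas on `rHatM` -/

lemma rHatM_succ_succ (n : ℕ) : rHatM (n + 2) = rho (rHatM (n + 1)) * (n : ℝ) / ((n : ℝ) + 1) :=
  rfl

lemma rHatM_mem : ∀ m : ℕ, rHatM (m + 1) ∈ Set.Icc (-1:ℝ) 1 := by
  intro m
  induction m with
  | zero => exact Set.mem_Icc.2 ⟨le_refl _, by norm_num [rHatM]⟩
  | succ n ih =>
    rw [rHatM_succ_succ]
    have h0 := rho_nonneg ih
    have h1 := rho_le_one ih
    have hn : (0:ℝ) ≤ (n:ℝ) := Nat.cast_nonneg n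
    constructor
    · have : 0 ≤ rho (rHatM (n + 1)) * (n:ℝ) / ((n:ℝ) + 1) := by positivity
      linarith
    · rw [div_le_one (by positivity)]
      nlinarith

lemma rHatM_nonneg (m : ℕ) : 0 ≤ rHatM (m + 2) := by
  rw [rHatM_succ_succ]
  have h0 := rho_nonneg (rHatM_mem m)
  positivity

/-! ### Auxiliary lemmas on `uFun` -/

lemma uFun_pos {σb a b : ℝ} (ha : 0 < a) (hb : 0 < b) (ℓ : ℕ) : 0 < uFun σb a b ℓ := by
  unfold uFun; positivity

lemma sqrt_uFun_succ {σb a b : ℝ} (ha : 0 < a) (hb : 0 < b) (ℓ : ℕ) :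
    Real.sqrt (uFun σb a b ℓ) + σb ^ 2 ≤ Real.sqrt (uFun σb a b (ℓ + 1)) := by
  have hu := uFun_pos (σb := σb) ha hb ℓ
  have hs : (0:ℝ) ≤ σb ^ 2 := sq_nonneg σb
  have hS0 : 0 ≤ Real.sqrt (uFun σb a b ℓ) := Real.sqrt_nonneg _
  have hAM : 2 * Real.sqrt (uFun σb a b ℓ) ≤ (a ^ 2 + ℓ * σb ^ 2) + (b ^ 2 + ℓ * σb ^ 2) := by
    have h1 : Real.sqrt (uFun σb a b ℓ) ≤
        Real.sqrt ((((a ^ 2 + ℓ * σb ^ 2) + (b ^ 2 + ℓ * σb ^ 2)) / 2) ^ 2) := by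
      apply Real.sqrt_le_sqrt
      unfold uFun
      nlinarith [sq_nonneg ((a ^ 2 + ℓ * σb ^ 2) - (b ^ 2 + ℓ * σb ^ 2))]
    rw [Real.sqrt_sq (by positivity)] at h1
    linarith
  have hsq : (Real.sqrt (uFun σb a b ℓ) + σb ^ 2) ^ 2 ≤ uFun σb a b (ℓ + 1) := by
    have h2 := Real.sq_sqrt hu.le
    unfold uFun at h2 hAM ⊢
    push_cast
    nlinarith [mul_le_mul_of_nonneg_left hAM hs]
  calc Real.sqrt (uFun σb a b ℓ) + σb ^ 2
      = Real.sqrt ((Real.sqrt (uFun σb a b ℓ) + σb ^ 2) ^ 2) := (Real.sqrt_sq (by positivity)).symm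
    _ ≤ _ := Real.sqrt_le_sqrt hsq

lemma sqrt_uFun_ratio {σb a b : ℝ} (ha : 0 < a) (hb : 0 < b) {ℓ m : ℕ} (h : ℓ ≤ m) :
    (ℓ : ℝ) * Real.sqrt (uFun σb a b m) ≤ (m : ℝ) * Real.sqrt (uFun σb a b ℓ) := by
  have hc : (ℓ:ℝ) ≤ (m:ℝ) := Nat.cast_le.2 h
  have h0 : (0:ℝ) ≤ (ℓ:ℝ) := Nat.cast_nonneg ℓ
  have key : (ℓ:ℝ) ^ 2 * uFun σb a b m ≤ (m:ℝ) ^ 2 * uFun σb a b ℓ := by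
    unfold uFun
    have h1 : 0 ≤ ((m:ℝ) ^ 2 - (ℓ:ℝ) ^ 2) * (a ^ 2 * b ^ 2) := by
      apply mul_nonneg ?_ (by positivity)
      nlinarith
    have h2 : 0 ≤ σb ^ 2 * (a ^ 2 + b ^ 2) * ((ℓ:ℝ) * (m:ℝ) * ((m:ℝ) - (ℓ:ℝ))) := by
      apply mul_nonneg (by positivity)
      apply mul_nonneg (by positivity)
      linarith
    nlinarith [h1, h2]
  calc (ℓ:ℝ) * Real.sqrt (uFun σb a b m)
      = Real.sqrt ((ℓ:ℝ) ^ 2 * uFun σb a b m) := by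
        rw [Real.sqrt_mul (sq_nonneg _), Real.sqrt_sq h0]
    _ ≤ Real.sqrt ((m:ℝ) ^ 2 * uFun σb a b ℓ) := Real.sqrt_le_sqrt key
    _ = (m:ℝ) * Real.sqrt (uFun σb a b ℓ) := by
        rw [Real.sqrt_mul (sq_nonneg _), Real.sqrt_sq (Nat.cast_nonneg m)]

/-! ### Auxiliary lemmas on the kernels -/

lemma Kker_diag (σb : ℝ) {d : ℕ} (v : EuclideanSpace ℝ (Fin d)) (hv : v ≠ 0) (ℓ : ℕ) :
    Kker σb ℓ v v = ‖v‖ ^ 2 + ℓ * σb ^ 2 := by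
  induction ℓ with
  | zero =>
    show (inner ℝ v v : ℝ) = _
    rw [real_inner_self_eq_norm_sq]
    push_cast
    ring
  | succ n ih =>
    have hv' : 0 < ‖v‖ := norm_pos_iff.mpr hv
    have hpos : 0 < ‖v‖ ^ 2 + n * σb ^ 2 := by positivity
    rw [show Kker σb (n+1) v v =
      Real.sqrt (Kker σb n v v * Kker σb n v v) *
        rho (Kker σb n v v / Real.sqrt (Kker σb n v v * Kker σb n v v)) + σb ^ 2 from rfl, ih]
    rw [show (‖v‖ ^ 2 + n * σb ^ 2) * (‖v‖ ^ 2 + n * σb ^ 2) = (‖v‖ ^ 2 + n * σb ^ 2) ^ 2 by ring,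
      Real.sqrt_sq hpos.le, div_self hpos.ne', rho_one]
    push_cast; ring

lemma Kker_rec (σb : ℝ) {d : ℕ} (x x' : EuclideanSpace ℝ (Fin d)) (hx : x ≠ 0) (hx' : x' ≠ 0)
    (ℓ : ℕ) :
    Kker σb (ℓ + 1) x x' = Real.sqrt (uFun σb ‖x‖ ‖x'‖ ℓ) *
      rho (Kker σb ℓ x x' / Real.sqrt (uFun σb ‖x‖ ‖x'‖ ℓ)) + σb ^ 2 := by
  rw [show Kker σb (ℓ+1) x x' =
      Real.sqrt (Kker σb ℓ x x * Kker σb ℓ x' x') *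
        rho (Kker σb ℓ x x' / Real.sqrt (Kker σb ℓ x x * Kker σb ℓ x' x')) + σb ^ 2 from rfl,
    Kker_diag σb x hx, Kker_diag σb x' hx']
  rfl

lemma Kdot_rec (σb : ℝ) {d : ℕ} (x x' : EuclideanSpace ℝ (Fin d)) (hx : x ≠ 0) (hx' : x' ≠ 0)
    (ℓ : ℕ) :
    Kdot σb (ℓ + 1) x x' = rhoPrime (Kker σb ℓ x x' / Real.sqrt (uFun σb ‖x‖ ‖x'‖ ℓ)) := by
  rw [show Kdot σb (ℓ+1) x x' =
      rhoPrime (Kker σb ℓ x x' / Real.sqrt (Kker σb ℓ x x * Kker σb ℓ x' x')) from rfl,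
    Kker_diag σb x hx, Kker_diag σb x' hx']
  rfl

lemma Kdot_nonneg (σb : ℝ) {d : ℕ} (x x' : EuclideanSpace ℝ (Fin d)) (ℓ : ℕ) :
    0 ≤ Kdot σb ℓ x x' := by
  cases ℓ with
  | zero => norm_num [Kdot]
  | succ n => exact rhoPrime_nonneg _

lemma Kdot_le_one (σb : ℝ) {d : ℕ} (x x' : EuclideanSpace ℝ (Fin d)) (ℓ : ℕ) :
    Kdot σb ℓ x x' ≤ 1 := by
  cases ℓ with
  | zero => norm_num [Kdot]
  | succ n => exact rhoPrime_le_one _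

/-- The main inductive bundle: boundedness, nonnegativity and the lower bound on the
normalized correlation. -/
lemma Kker_bundle (σb : ℝ) {d : ℕ} (x x' : EuclideanSpace ℝ (Fin d)) (hx : x ≠ 0)
    (hx' : x' ≠ 0) : ∀ ℓ : ℕ,
    |Kker σb ℓ x x'| ≤ Real.sqrt (uFun σb ‖x‖ ‖x'‖ ℓ) ∧
    (1 ≤ ℓ → 0 ≤ Kker σb ℓ x x' ∧
      rHatM (ℓ + 1) ≤ Kker σb ℓ x x' / Real.sqrt (uFun σb ‖x‖ ‖x'‖ ℓ)) := by
  have ha : 0 < ‖x‖ := norm_pos_iff.mpr hx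
  have hb : 0 < ‖x'‖ := norm_pos_iff.mpr hx'
  have hSpos : ∀ ℓ, 0 < Real.sqrt (uFun σb ‖x‖ ‖x'‖ ℓ) :=
    fun ℓ => Real.sqrt_pos.2 (uFun_pos ha hb ℓ)
  intro ℓ
  induction ℓ with
  | zero =>
    constructor
    · have h1 : |(inner ℝ x x' : ℝ)| ≤ ‖x‖ * ‖x'‖ := abs_real_inner_le_norm x x'
      have h2 : Real.sqrt (uFun σb ‖x‖ ‖x'‖ 0) = ‖x‖ * ‖x'‖ := by
        rw [show uFun σb ‖x‖ ‖x'‖ 0 = (‖x‖ * ‖x'‖) ^ 2 by unfold uFun; push_cast; ring,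
          Real.sqrt_sq (by positivity)]
      rw [h2]
      exact h1
    · intro h; exact absurd h (by omega)
  | succ n ih =>
    have hKS := ih.1
    have hrmem : Kker σb n x x' / Real.sqrt (uFun σb ‖x‖ ‖x'‖ n) ∈ Set.Icc (-1:ℝ) 1 := by
      have habs : |Kker σb n x x' / Real.sqrt (uFun σb ‖x‖ ‖x'‖ n)| ≤ 1 := by
        rw [abs_div, abs_of_pos (hSpos n)]
        exact (div_le_one (hSpos n)).2 hKS
      exact Set.mem_Icc.2 (abs_le.1 habs)
    have hrec := Kker_rec σb x x' hx hx' n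
    have hρ0 := rho_nonneg hrmem
    have hρ1 := rho_le_one hrmem
    have h0 : 0 ≤ Kker σb (n+1) x x' := by
      rw [hrec]
      have := (hSpos n).le
      positivity
    have hup : Kker σb (n+1) x x' ≤ Real.sqrt (uFun σb ‖x‖ ‖x'‖ (n+1)) := by
      rw [hrec]
      have h1 : Real.sqrt (uFun σb ‖x‖ ‖x'‖ n) *
          rho (Kker σb n x x' / Real.sqrt (uFun σb ‖x‖ ‖x'‖ n)) ≤
          Real.sqrt (uFun σb ‖x‖ ‖x'‖ n) := by
        nlinarith [(hSpos n).le]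
      have h2 := sqrt_uFun_succ (σb := σb) ha hb n
      linarith
    refine ⟨abs_le.2 ⟨by linarith [(hSpos (n+1)).le], hup⟩, fun _ => ⟨h0, ?_⟩⟩
    -- the correlation lower bound
    rw [le_div_iff₀ (hSpos (n+1))]
    cases n with
    | zero =>
      have : rHatM 2 = 0 := by
        rw [rHatM_succ_succ]
        norm_num
      rw [show (0:ℕ)+1+1 = 2 from rfl, this]
      nlinarith [(hSpos 1).le, h0]
    | succ m =>
      obtain ⟨hK0, hrhat⟩ := ih.2 (by omega)
      have hmono := rho_monotoneOn (rHatM_mem (m+1)) hrmem hrhat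
      have hratio := sqrt_uFun_ratio (σb := σb) ha hb (show m+1 ≤ m+2 by omega)
      rw [show (m:ℕ)+1+1+1 = (m+1)+2 from rfl, rHatM_succ_succ]
      push_cast
      have hS1 := (hSpos (m+1)).le
      have hS2 := (hSpos (m+2)).le
      have hρhat0 := rho_nonneg (rHatM_mem (m+1))
      -- goal: rho (rHatM (m+2)) * (m+1) / (m+2) * S(m+2) ≤ K(m+2)
      have hstep : rho (rHatM (m+1+1)) * ((m:ℝ)+1) / ((m:ℝ)+1+1) *
          Real.sqrt (uFun σb ‖x‖ ‖x'‖ (m+2)) ≤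
          rho (rHatM (m+1+1)) * Real.sqrt (uFun σb ‖x‖ ‖x'‖ (m+1)) := by
        rw [div_mul_eq_mul_div, div_le_iff₀ (by positivity)]
        push_cast at hratio
        nlinarith [rho_nonneg (rHatM_mem (m+1+1)), rho_nonneg (rHatM_mem m),
          rho_nonneg (rHatM_mem (m+1)), hratio]
      have hstep2 : rho (rHatM (m+1+1)) * Real.sqrt (uFun σb ‖x‖ ‖x'‖ (m+1)) ≤
          Kker σb (m+2) x x' := by
        rw [Kker_rec σb x x' hx hx' (m+1)]
        have hmono' := rho_monotoneOn (rHatM_mem (m+1)) hrmem hrhat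
        nlinarith [sq_nonneg σb, hS1]
      calc rho (rHatM (m+1+1)) * ((m:ℝ)+1) / ((m:ℝ)+1+1) *
            Real.sqrt (uFun σb ‖x‖ ‖x'‖ (m+1+1)) ≤
          rho (rHatM (m+1+1)) * Real.sqrt (uFun σb ‖x‖ ‖x'‖ (m+1)) := hstep
        _ ≤ Kker σb (m+1+1) x x' := hstep2

/-- Theorem A.14: for `L ≥ 2`, `σ_b ≥ 0` and nonzero `x, x'`,
`K^(L+1)(x,x') > 0` and
`1 + Σ_{ℓ=1}^{L} ρ(r̂_−^(ℓ))·((ℓ−1)/(L+1))·Π_{ℓ'=ℓ+1}^{L+1} ρ'(r̂_−^(ℓ'))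
  ≤ Θ(x,x')/K^(L+1)(x,x') ≤ 1 + L/ρ(r̂_−^(L+1))`. -/
theorem ntk_div_Kker_bound (L : ℕ) (hL : 2 ≤ L) (σb : ℝ) (hσb : 0 ≤ σb) {d : ℕ}
    (x x' : EuclideanSpace ℝ (Fin d)) (hx : x ≠ 0) (hx' : x' ≠ 0) :
    0 < Kker σb (L + 1) x x' ∧
    1 + ∑ ℓ ∈ Finset.Icc 1 L,
          rho (rHatM ℓ) * (((ℓ : ℝ) - 1) / ((L : ℝ) + 1)) *
            ∏ ℓ' ∈ Finset.Icc (ℓ + 1) (L + 1), rhoPrime (rHatM ℓ') ≤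
        ntk σb L x x' / Kker σb (L + 1) x x' ∧
    ntk σb L x x' / Kker σb (L + 1) x x' ≤ 1 + (L : ℝ) / rho (rHatM (L + 1)) := by
  have ha : 0 < ‖x‖ := norm_pos_iff.mpr hx
  have hb : 0 < ‖x'‖ := norm_pos_iff.mpr hx'
  have hπ := Real.pi_pos
  have hSpos : ∀ ℓ, 0 < Real.sqrt (uFun σb ‖x‖ ‖x'‖ ℓ) :=
    fun ℓ => Real.sqrt_pos.2 (uFun_pos ha hb ℓ)
  have bundle := Kker_bundle σb x x' hx hx'
  have hrmem : ∀ n : ℕ,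
      Kker σb n x x' / Real.sqrt (uFun σb ‖x‖ ‖x'‖ n) ∈ Set.Icc (-1:ℝ) 1 := by
    intro n
    have habs : |Kker σb n x x' / Real.sqrt (uFun σb ‖x‖ ‖x'‖ n)| ≤ 1 := by
      rw [abs_div, abs_of_pos (hSpos n)]
      exact (div_le_one (hSpos n)).2 (bundle n).1
    exact Set.mem_Icc.2 (abs_le.1 habs)
  -- monotonicity of `K` in the depth
  have hKstep : ∀ n : ℕ, Kker σb n x x' ≤ Kker σb (n+1) x x' := by
    intro n
    have h := le_rho (hrmem n)
    have hK := (div_le_iff₀ (hSpos n)).1 h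
    rw [Kker_rec σb x x' hx hx' n]
    nlinarith [sq_nonneg σb]
  have hKmono : Monotone (fun n => Kker σb n x x') := monotone_nat_of_le_succ hKstep
  -- `rHatM (L+1)` facts
  have hhat0 : ∀ m : ℕ, 2 ≤ m → 0 ≤ rHatM m := by
    intro m hm
    obtain ⟨k, rfl⟩ : ∃ k, m = k + 2 := ⟨m - 2, by omega⟩
    exact rHatM_nonneg k
  have hhatmemL : rHatM (L + 1) ∈ Set.Icc (-1:ℝ) 1 := rHatM_mem L
  have hρhatL : 1 / π ≤ rho (rHatM (L + 1)) := by
    have h := rho_monotoneOn (Set.mem_Icc.2 ⟨by norm_num, by norm_num⟩) hhatmemL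
      (hhat0 (L+1) (by omega))
    rwa [rho_zero] at h
  have hρhatLpos : 0 < rho (rHatM (L + 1)) := lt_of_lt_of_le (by positivity) hρhatL
  have hρhatLle : rho (rHatM (L + 1)) ≤ 1 := rho_le_one hhatmemL
  -- positivity of `K^(L+1)`
  have hKLpos : 0 < Kker σb (L + 1) x x' := by
    have h := (bundle L).2 (by omega)
    have h0r : 0 ≤ Kker σb L x x' / Real.sqrt (uFun σb ‖x‖ ‖x'‖ L) := by
      have : 0 ≤ rHatM (L + 1) := hhat0 (L+1) (by omega)
      linarith [h.2]
    have hρ : 1 / π ≤ rho (Kker σb L x x' / Real.sqrt (uFun σb ‖x‖ ‖x'‖ L)) := by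
      have hm := rho_monotoneOn (Set.mem_Icc.2 ⟨by norm_num, by norm_num⟩) (hrmem L) h0r
      rwa [rho_zero] at hm
    rw [Kker_rec σb x x' hx hx' L]
    nlinarith [hSpos L, sq_nonneg σb, mul_le_mul_of_nonneg_left hρ (hSpos L).le,
      mul_pos (hSpos L) (show (0:ℝ) < 1/π by positivity)]
  have hKL0 : 0 ≤ Kker σb (L + 1) x x' := hKLpos.le
  -- splitting off the top term of the NTK sum
  have hsplit : ntk σb L x x' = Kker σb (L + 1) x x' +
      ∑ ℓ ∈ Finset.Icc 1 L,
        Kker σb ℓ x x' * ∏ ℓ' ∈ Finset.Icc (ℓ + 1) (L + 1), Kdot σb ℓ' x x' := by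
    unfold ntk
    rw [← Finset.insert_Icc_right_eq_Icc_add_one (show 1 ≤ L + 1 by omega),
      Finset.sum_insert (by simp)]
    rw [Finset.Icc_eq_empty (by omega), Finset.prod_empty, mul_one]
  -- upper bound
  have hterm_le : ∀ ℓ ∈ Finset.Icc 1 L,
      Kker σb ℓ x x' * ∏ ℓ' ∈ Finset.Icc (ℓ + 1) (L + 1), Kdot σb ℓ' x x' ≤
        Kker σb (L + 1) x x' := by
    intro ℓ hℓ
    obtain ⟨h1ℓ, hℓL⟩ := Finset.mem_Icc.1 hℓ
    have hK0 : 0 ≤ Kker σb ℓ x x' := ((bundle ℓ).2 h1ℓ).1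
    have hKle : Kker σb ℓ x x' ≤ Kker σb (L + 1) x x' := hKmono (by omega)
    have hP1 : ∏ ℓ' ∈ Finset.Icc (ℓ + 1) (L + 1), Kdot σb ℓ' x x' ≤ 1 :=
      Finset.prod_le_one (fun i _ => Kdot_nonneg σb x x' i) (fun i _ => Kdot_le_one σb x x' i)
    have hP0 : 0 ≤ ∏ ℓ' ∈ Finset.Icc (ℓ + 1) (L + 1), Kdot σb ℓ' x x' :=
      Finset.prod_nonneg (fun i _ => Kdot_nonneg σb x x' i)
    calc Kker σb ℓ x x' * ∏ ℓ' ∈ Finset.Icc (ℓ + 1) (L + 1), Kdot σb ℓ' x x'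
        ≤ Kker σb (L + 1) x x' * 1 := mul_le_mul hKle hP1 hP0 hKL0
      _ = Kker σb (L + 1) x x' := mul_one _
  have hsum_le : ∑ ℓ ∈ Finset.Icc 1 L,
      Kker σb ℓ x x' * ∏ ℓ' ∈ Finset.Icc (ℓ + 1) (L + 1), Kdot σb ℓ' x x' ≤
        (L : ℝ) * Kker σb (L + 1) x x' := by
    have h := Finset.sum_le_card_nsmul (Finset.Icc 1 L) _ _ hterm_le
    rwa [Nat.card_Icc, Nat.add_sub_cancel, nsmul_eq_mul] at h
  have hupper : ntk σb L x x' / Kker σb (L + 1) x x' ≤ 1 + (L : ℝ) / rho (rHatM (L + 1)) := by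
    have h1 : ntk σb L x x' / Kker σb (L + 1) x x' ≤ 1 + (L : ℝ) := by
      rw [div_le_iff₀ hKLpos, hsplit]
      nlinarith
    have h2 : (L : ℝ) ≤ (L : ℝ) / rho (rHatM (L + 1)) := by
      rw [le_div_iff₀ hρhatLpos]
      nlinarith [Nat.cast_nonneg (α := ℝ) L]
    linarith
  -- lower bound
  have hlower : 1 + ∑ ℓ ∈ Finset.Icc 1 L,
      rho (rHatM ℓ) * (((ℓ : ℝ) - 1) / ((L : ℝ) + 1)) *
        ∏ ℓ' ∈ Finset.Icc (ℓ + 1) (L + 1), rhoPrime (rHatM ℓ') ≤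
      ntk σb L x x' / Kker σb (L + 1) x x' := by
    rw [le_div_iff₀ hKLpos, hsplit]
    have key : (∑ ℓ ∈ Finset.Icc 1 L,
        rho (rHatM ℓ) * (((ℓ : ℝ) - 1) / ((L : ℝ) + 1)) *
          ∏ ℓ' ∈ Finset.Icc (ℓ + 1) (L + 1), rhoPrime (rHatM ℓ')) * Kker σb (L + 1) x x' ≤
        ∑ ℓ ∈ Finset.Icc 1 L,
          Kker σb ℓ x x' * ∏ ℓ' ∈ Finset.Icc (ℓ + 1) (L + 1), Kdot σb ℓ' x x' := by
      rw [Finset.sum_mul]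
      apply Finset.sum_le_sum
      intro ℓ hℓ
      obtain ⟨h1ℓ, hℓL⟩ := Finset.mem_Icc.1 hℓ
      have hK0 : 0 ≤ Kker σb ℓ x x' := ((bundle ℓ).2 h1ℓ).1
      have hProd : ∏ ℓ' ∈ Finset.Icc (ℓ + 1) (L + 1), rhoPrime (rHatM ℓ') ≤
          ∏ ℓ' ∈ Finset.Icc (ℓ + 1) (L + 1), Kdot σb ℓ' x x' := by
        apply Finset.prod_le_prod (fun i _ => rhoPrime_nonneg _)
        intro i hi
        obtain ⟨hi1, hi2⟩ := Finset.mem_Icc.1 hi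
        obtain ⟨k, rfl⟩ : ∃ k, i = k + 2 := ⟨i - 2, by omega⟩
        rw [Kdot_rec σb x x' hx hx' (k + 1)]
        exact rhoPrime_mono ((bundle (k + 1)).2 (by omega)).2
      have hProd0 : 0 ≤ ∏ ℓ' ∈ Finset.Icc (ℓ + 1) (L + 1), rhoPrime (rHatM ℓ') :=
        Finset.prod_nonneg (fun i _ => rhoPrime_nonneg _)
      have hcK : rho (rHatM ℓ) * (((ℓ : ℝ) - 1) / ((L : ℝ) + 1)) * Kker σb (L + 1) x x' ≤
          Kker σb ℓ x x' := by
        rcases eq_or_lt_of_le h1ℓ with rfl | h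
        · norm_num
          exact hK0
        · obtain ⟨m, rfl⟩ : ∃ m, ℓ = m + 2 := ⟨ℓ - 2, by omega⟩
          have hρ0 : 0 ≤ rho (rHatM (m + 2)) := rho_nonneg (rHatM_mem (m + 1))
          have hKLle : Kker σb (L + 1) x x' ≤ Real.sqrt (uFun σb ‖x‖ ‖x'‖ (L + 1)) :=
            (le_abs_self _).trans (bundle (L + 1)).1
          have hratio := sqrt_uFun_ratio (σb := σb) ha hb (show m + 1 ≤ L + 1 by omega)
          have hrhat := ((bundle (m + 1)).2 (by omega)).2
          have hmono := rho_monotoneOn (rHatM_mem (m + 1)) (hrmem (m + 1)) hrhat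
          have hKl : rho (rHatM (m + 2)) * Real.sqrt (uFun σb ‖x‖ ‖x'‖ (m + 1)) ≤
              Kker σb (m + 2) x x' := by
            rw [Kker_rec σb x x' hx hx' (m + 1)]
            nlinarith [sq_nonneg σb, (hSpos (m + 1)).le]
          have ht : ((m : ℝ) + 1) / ((L : ℝ) + 1) * Real.sqrt (uFun σb ‖x‖ ‖x'‖ (L + 1)) ≤
              Real.sqrt (uFun σb ‖x‖ ‖x'‖ (m + 1)) := by
            rw [div_mul_eq_mul_div, div_le_iff₀ (by positivity)]
            push_cast at hratio
            linarith
          have ht0 : (0:ℝ) ≤ ((m : ℝ) + 1) / ((L : ℝ) + 1) := by positivity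
          push_cast
          calc rho (rHatM (m + 2)) * (((m : ℝ) + 2 - 1) / ((L : ℝ) + 1)) * Kker σb (L+1) x x'
              = rho (rHatM (m + 2)) * ((((m : ℝ) + 1) / ((L : ℝ) + 1)) * Kker σb (L+1) x x') := by
                ring
            _ ≤ rho (rHatM (m + 2)) *
                ((((m : ℝ) + 1) / ((L : ℝ) + 1)) * Real.sqrt (uFun σb ‖x‖ ‖x'‖ (L + 1))) := by
                apply mul_le_mul_of_nonneg_left ?_ hρ0
                exact mul_le_mul_of_nonneg_left hKLle ht0
            _ ≤ rho (rHatM (m + 2)) * Real.sqrt (uFun σb ‖x‖ ‖x'‖ (m + 1)) :=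
                mul_le_mul_of_nonneg_left ht hρ0
            _ ≤ Kker σb (m + 2) x x' := hKl
      calc rho (rHatM ℓ) * (((ℓ : ℝ) - 1) / ((L : ℝ) + 1)) *
            (∏ ℓ' ∈ Finset.Icc (ℓ + 1) (L + 1), rhoPrime (rHatM ℓ')) * Kker σb (L + 1) x x'
          = (rho (rHatM ℓ) * (((ℓ : ℝ) - 1) / ((L : ℝ) + 1)) * Kker σb (L + 1) x x') *
            ∏ ℓ' ∈ Finset.Icc (ℓ + 1) (L + 1), rhoPrime (rHatM ℓ') := by ring
        _ ≤ Kker σb ℓ x x' * ∏ ℓ' ∈ Finset.Icc (ℓ + 1) (L + 1), Kdot σb ℓ' x x' :=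
            mul_le_mul hcK hProd hProd0 hK0
    nlinarith [key]
  exact ⟨hKLpos, hlower, hupper⟩
end
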